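/- arXiv:1001.0191 — 4 statements merged into one kernel-verified Lean document; each statement's English description precedes it below -/
import Mathlib

section
/- In an associative ring of characteristic p (p prime), for any elements X and Y one has \sum_{k=0}^{p-1} X^k Y X^{p-1-k} = (ad X)^{p-1}(Y), where ad X denotes the map Z \mapsto XZ - ZX. -/
open Finset LinearMap

private lemma choose_cast_eq {R : Type*} [Ring R] (p : ℕ) (hp : p.Prime) [CharP R p] :
    ∀ m, m ≤ p - 1 → (((p - 1).choose m : ℕ) : R) = (-1) ^ m := by
  intro m
  induction m with
  | zero => simp
  | succ m ih =>
    intro hm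
    have hm' : m ≤ p - 1 := Nat.le_of_succ_le hm
    have hps : p - 1 + 1 = p := Nat.succ_pred_eq_of_pos hp.pos
    have hpsucc : (p - 1).choose m + (p - 1).choose (m + 1) = p.choose (m + 1) := by
      conv_rhs => rw [← hps]
      rw [Nat.choose_succ_succ]
    have hdvd : p ∣ p.choose (m + 1) := hp.dvd_choose_self (Nat.succ_ne_zero m) (by omega)
    have hzero : ((p.choose (m + 1) : ℕ) : R) = 0 :=
      (CharP.cast_eq_zero_iff R p _).mpr hdvd
    have h : (((p - 1).choose m : ℕ) : R) + (((p - 1).choose (m + 1) : ℕ) : R) = 0 := by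
      rw [← Nat.cast_add, hpsucc, hzero]
    have h2 : (((p - 1).choose (m + 1) : ℕ) : R) = -(((p - 1).choose m : ℕ) : R) :=
      eq_neg_of_add_eq_zero_right h
    rw [h2, ih hm', pow_succ, mul_neg_one]

private lemma neg_mulRight_pow {R : Type*} [Ring R] (X : R) (k : ℕ) (y : R) :
    ((-(mulRight ℤ X)) ^ k) y = (-1 : R) ^ k * (y * X ^ k) := by
  induction k generalizing y with
  | zero => simp
  | succ k ih =>
    rw [pow_succ', Module.End.mul_apply]
    simp only [LinearMap.neg_apply, mulRight_apply, map_neg, ih]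
    have h1 : (-1 : R) ^ (k + 1) = -((-1 : R) ^ k) := by rw [pow_succ, mul_neg_one]
    rw [h1, neg_mul, neg_inj, mul_assoc, mul_assoc, pow_succ', ← mul_assoc y X (X ^ k),
      ← pow_succ, mul_assoc, ← pow_succ']

/-- In an associative ring of characteristic `p` (`p` prime), for any elements `X Y`,
`∑_{k=0}^{p-1} X^k Y X^{p-1-k} = (ad X)^{p-1}(Y)` where `ad X : Z ↦ XZ - ZX`. -/
theorem stmt0 {R : Type*} [Ring R] (p : ℕ) (hp : p.Prime) [CharP R p] (X Y : R) :
    ∑ k ∈ Finset.range p, X ^ k * Y * X ^ (p - 1 - k) =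
      (fun Z => X * Z - Z * X)^[p - 1] Y := by
  set n := p - 1 with hn
  have hps : n + 1 = p := Nat.succ_pred_eq_of_pos hp.pos
  set L : R →ₗ[ℤ] R := mulLeft ℤ X with hL
  set Rm : R →ₗ[ℤ] R := mulRight ℤ X with hRm
  have hcomm : Commute L (-Rm) := by
    apply Commute.neg_right
    ext z
    simp [hL, hRm, mul_assoc]
  have hfun : (fun Z : R => X * Z - Z * X) = ⇑(L - Rm) := by
    ext z; simp [hL, hRm]
  have hneg1 : (-1 : R) ^ n = 1 := by
    rcases hp.eq_two_or_odd' with h2 | hodd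
    · subst h2
      have h0 : (1 : R) + 1 = 0 := by
        rw [one_add_one_eq_two]
        exact_mod_cast CharP.cast_eq_zero R 2
      have : (-1 : R) = 1 := neg_eq_of_add_eq_zero_left h0
      rw [this, one_pow]
    · have : Even n := by
        have := Nat.Odd.sub_odd hodd odd_one
        simpa [hn] using this
      exact this.neg_one_pow
  rw [hfun, ← Module.End.pow_apply, sub_eq_add_neg, hcomm.add_pow, LinearMap.sum_apply, ← hps]
  apply Finset.sum_congr rfl
  intro m hm
  have hm' : m ≤ n := Nat.lt_succ_iff.mp (Finset.mem_range.mp hm)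
  rw [Module.End.mul_apply, Module.End.mul_apply, Module.End.natCast_apply,
    map_nsmul, map_nsmul, neg_mulRight_pow]
  have hLm : (L ^ m) ((-1 : R) ^ (n - m) * (Y * X ^ (n - m)))
      = X ^ m * ((-1 : R) ^ (n - m) * (Y * X ^ (n - m))) := by
    rw [hL, LinearMap.pow_mulLeft, mulLeft_apply]
  rw [hLm, nsmul_eq_mul, choose_cast_eq p hp m hm']
  have hc : X ^ m * ((-1 : R) ^ (n - m) * (Y * X ^ (n - m)))
      = (-1 : R) ^ (n - m) * (X ^ m * (Y * X ^ (n - m))) := by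
    rcases neg_one_pow_eq_or R (n - m) with h | h <;> rw [h] <;>
      simp [neg_mul, mul_neg]
  rw [hc, ← mul_assoc, ← pow_add, Nat.add_sub_cancel' hm', hneg1, one_mul, ← mul_assoc]
end

section
/- Let \mathcal{O} = \bigoplus_{g \in G} \mathcal{O}_g be a grading of \mathcal{O}(m;1) by an abelian group G, and let P = { g \in G : \mathcal{O}_g \not\subseteq \mathfrak{M} }, where \mathfrak{M} is the unique maximal ideal. Then P is a subgroup of G in which every element satisfies g^p = e, i.e., P is an elementary abelian p-subgroup. -/
set_option synthInstance.maxHeartbeats 1000000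
set_option maxHeartbeats 1000000

noncomputable abbrev TruncO (F : Type*) [Field F] (p m : ℕ) : Type _ :=
  MvPolynomial (Fin m) F ⧸ Ideal.span (Set.range fun i : Fin m =>
    (MvPolynomial.X i : MvPolynomial (Fin m) F) ^ p)

noncomputable def xv (F : Type*) [Field F] (p m : ℕ) (i : Fin m) : TruncO F p m :=
  Ideal.Quotient.mk _ (MvPolynomial.X i)

noncomputable def psi (F : Type*) [Field F] (p m : ℕ) (hp : p ≠ 0) : TruncO F p m →+* F :=
  Ideal.Quotient.lift _ MvPolynomial.constantCoeff (by
    intro f hf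
    refine (Ideal.span_le (I := RingHom.ker MvPolynomial.constantCoeff)).mpr ?_ hf
    rintro _ ⟨i, rfl⟩
    simp [RingHom.mem_ker, zero_pow hp])

lemma psi_mk {F : Type*} [Field F] {p m : ℕ} (hp : p ≠ 0) (f : MvPolynomial (Fin m) F) :
    psi F p m hp (Ideal.Quotient.mk _ f) = MvPolynomial.constantCoeff f :=
  Ideal.Quotient.lift_mk _ _ _

lemma psi_one {F : Type*} [Field F] {p m : ℕ} (hp : p ≠ 0) :
    psi F p m hp 1 = 1 := map_one _

lemma psi_smul_one {F : Type*} [Field F] {p m : ℕ} (hp : p ≠ 0) (c : F) :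
    psi F p m hp (c • (1 : TruncO F p m)) = c := by
  have h1 : c • (1 : TruncO F p m) = Ideal.Quotient.mk _ (MvPolynomial.C c) := by
    rw [Algebra.algebraMap_eq_smul_one (A := TruncO F p m) c |>.symm]
    rw [IsScalarTower.algebraMap_apply F (MvPolynomial (Fin m) F) (TruncO F p m)]
    rw [MvPolynomial.algebraMap_eq, Ideal.Quotient.algebraMap_eq]
  rw [h1, psi_mk, MvPolynomial.constantCoeff_C]

lemma mem_M_iff {F : Type*} [Field F] {p m : ℕ} (hp : p ≠ 0) (z : TruncO F p m) :
    z ∈ Ideal.span (Set.range fun i : Fin m => xv F p m i) ↔ psi F p m hp z = 0 := by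
  constructor
  · intro hz
    refine (Ideal.span_le (I := RingHom.ker (psi F p m hp))).mpr ?_ hz
    rintro _ ⟨i, rfl⟩
    show psi F p m hp (xv F p m i) = 0
    rw [xv, psi_mk, MvPolynomial.constantCoeff_X]
  · intro hz
    obtain ⟨f, rfl⟩ := Ideal.Quotient.mk_surjective z
    rw [psi_mk] at hz
    have hf : f ∈ Ideal.span (MvPolynomial.X '' (Set.univ : Set (Fin m)) :
        Set (MvPolynomial (Fin m) F)) := by
      rw [MvPolynomial.mem_ideal_span_X_image]
      intro mon hmon
      by_contra hcon
      push_neg at hcon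
      have hm0 : mon = 0 := by
        ext i
        simpa using hcon i (Set.mem_univ i)
      rw [hm0] at hmon
      exact (MvPolynomial.mem_support_iff.mp hmon) hz
    rw [Set.image_univ] at hf
    have hmap := Ideal.mem_map_of_mem (Ideal.Quotient.mk
      (Ideal.span (Set.range fun i : Fin m =>
        (MvPolynomial.X i : MvPolynomial (Fin m) F) ^ p))) hf
    rw [Ideal.map_span, ← Set.range_comp] at hmap
    simpa [Function.comp_def, xv] using hmap

lemma truncO_one_ne_zero {F : Type*} [Field F] {p m : ℕ} (hp : p ≠ 0) :
    (1 : TruncO F p m) ≠ 0 := by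
  intro h
  have := psi_one (F := F) (m := m) hp
  rw [h, map_zero] at this
  exact one_ne_zero this.symm

lemma truncO_pow_p_eq_zero {F : Type*} [Field F] {p m : ℕ} [CharP F p] (hpp : p.Prime)
    (n : TruncO F p m) (hn : n ∈ Ideal.span (Set.range fun i : Fin m => xv F p m i)) :
    n ^ p = 0 := by
  haveI : Fact p.Prime := ⟨hpp⟩
  haveI : Nontrivial (TruncO F p m) := nontrivial_of_ne 1 0 (truncO_one_ne_zero hpp.ne_zero)
  haveI : CharP (TruncO F p m) p := charP_of_injective_algebraMap' (A := TruncO F p m) F p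
  induction hn using Submodule.span_induction with
  | mem x hx =>
      obtain ⟨i, rfl⟩ := hx
      show (xv F p m i) ^ p = 0
      rw [xv, ← map_pow, Ideal.Quotient.eq_zero_iff_mem]
      exact Ideal.subset_span ⟨i, rfl⟩
  | zero => rw [zero_pow hpp.ne_zero]
  | add x y hx hy ihx ihy => rw [add_pow_char, ihx, ihy, add_zero]
  | smul r x hx ih => rw [smul_eq_mul, mul_pow, ih, mul_zero]
/-- For a `G`-grading `𝒪 = ⨁_g 𝒪_g` of `𝒪(m;1)` by an abelian group `G`, the set
`P = {g : 𝒪_g ⊄ 𝔐}` (where `𝔐` is the unique maximal ideal) is a subgroup of `G`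
in which every element satisfies `g^p = e`: an elementary abelian `p`-subgroup. -/
theorem stmt4 {F : Type*} [Field F] [IsAlgClosed F] (p m : ℕ) (hp : p.Prime) [CharP F p]
    {G : Type*} [CommGroup G] [DecidableEq G]
    (comp : G → Submodule F (TruncO F p m))
    (hdirect : DirectSum.IsInternal comp)
    (hmul : ∀ g h : G, ∀ a ∈ comp g, ∀ b ∈ comp h, a * b ∈ comp (g * h)) :
    let M := Ideal.span (Set.range fun i : Fin m => xv F p m i)
    let P : Set G := {g | ¬ (comp g : Set (TruncO F p m)) ⊆ (M : Set (TruncO F p m))}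
    (1 : G) ∈ P ∧ (∀ a ∈ P, ∀ b ∈ P, a * b ∈ P) ∧ (∀ g ∈ P, g⁻¹ ∈ P) ∧
      ∀ g ∈ P, g ^ p = 1 := by
  intro M P
  classical
  set O := TruncO F p m with hO
  set ψ := psi F p m hp.ne_zero with hψ
  -- membership in P via ψ
  have hPmem : ∀ g : G, g ∈ P ↔ ∃ z ∈ comp g, ψ z ≠ 0 := by
    intro g
    constructor
    · intro hg
      obtain ⟨z, hz, hzM⟩ := Set.not_subset.mp hg
      exact ⟨z, hz, fun h => hzM ((mem_M_iff hp.ne_zero z).mpr h)⟩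
    · rintro ⟨z, hz, hz0⟩
      exact Set.not_subset.mpr ⟨z, hz, fun h => hz0 ((mem_M_iff hp.ne_zero z).mp h)⟩
  -- the decomposition of 1
  obtain ⟨u, hu⟩ := hdirect.surjective 1
  have hsum : ∑ h ∈ DFinsupp.support u, ((u h : O)) = 1 := by
    conv_rhs => rw [← hu, ← DirectSum.sum_support_of u]
    rw [map_sum]
    simp [DirectSum.coeAddMonoidHom_of]
  have hindep := hdirect.submodule_iSupIndep
  -- key lemma: right multiplication by u 1 is identity on homogeneous elements
  have key : ∀ g : G, ∀ a : O, a ∈ comp g → a * (u 1 : O) = a := by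
    intro g a ha
    have hd := iSupIndep_def.mp hindep g
    have h1 : a - a * (u 1 : O) ∈ comp g := by
      have h2 := hmul g 1 a ha _ (u 1).2
      rw [mul_one] at h2
      exact sub_mem ha h2
    have ha' : a = ∑ h ∈ DFinsupp.support u, a * (u h : O) := by
      rw [← Finset.mul_sum, hsum, mul_one]
    have hsplit : ∑ h ∈ DFinsupp.support u, a * (u h : O)
        = a * (u 1 : O) + ∑ h ∈ (DFinsupp.support u).erase 1, a * (u h : O) := by
      by_cases h1s : (1 : G) ∈ DFinsupp.support u
      · exact (Finset.add_sum_erase _ _ h1s).symm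
      · rw [Finset.erase_eq_of_notMem h1s, DFinsupp.notMem_support_iff.mp h1s]
        simp
    have h2 : a - a * (u 1 : O) ∈ ⨆ (j) (_ : j ≠ g), comp j := by
      have heq : a - a * (u 1 : O) = ∑ h ∈ (DFinsupp.support u).erase 1, a * (u h : O) := by
        nth_rewrite 1 [ha']
        rw [hsplit]
        ring
      rw [heq]
      refine Submodule.sum_mem _ ?_
      intro h hh
      have hne : g * h ≠ g := fun hEq =>
        (Finset.mem_erase.mp hh).1
          (mul_left_cancel (a := g) (show g * h = g * 1 by rw [hEq, mul_one]))
      exact Submodule.mem_iSup_of_mem (g * h)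
        (Submodule.mem_iSup_of_mem hne (hmul g h a ha _ (u h).2))
    have h0 := Submodule.disjoint_def.mp hd _ h1 h2
    exact (sub_eq_zero.mp h0).symm
  -- 1 lies in the identity component
  have hone : (1 : O) ∈ comp 1 := by
    have h1 : (1 : O) * (u 1 : O) = 1 := by
      calc (1 : O) * (u 1 : O) = (∑ h ∈ DFinsupp.support u, ((u h : O))) * (u 1 : O) := by
            rw [hsum]
        _ = ∑ h ∈ DFinsupp.support u, (u h : O) * (u 1 : O) := Finset.sum_mul _ _ _
        _ = ∑ h ∈ DFinsupp.support u, ((u h : O)) :=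
            Finset.sum_congr rfl fun h _ => key h _ (u h).2
        _ = 1 := hsum
    rw [one_mul] at h1
    rw [← h1]
    exact (u 1).2
  -- powers of homogeneous elements
  have hpow : ∀ g : G, ∀ a : O, a ∈ comp g → ∀ k : ℕ, a ^ k ∈ comp (g ^ k) := by
    intro g a ha k
    induction k with
    | zero => simpa using hone
    | succ k ih =>
        rw [pow_succ, pow_succ]
        exact hmul _ _ _ ih _ ha
  have hone_ne : (1 : O) ≠ 0 := truncO_one_ne_zero hp.ne_zero
  -- 1 ∈ P
  have hP1 : (1 : G) ∈ P := (hPmem 1).mpr ⟨1, hone, by rw [hψ, psi_one]; exact one_ne_zero⟩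
  -- closure under multiplication
  have hPmul : ∀ a ∈ P, ∀ b ∈ P, a * b ∈ P := by
    intro a ha b hb
    obtain ⟨z, hz, hz0⟩ := (hPmem a).mp ha
    obtain ⟨w, hw, hw0⟩ := (hPmem b).mp hb
    refine (hPmem (a * b)).mpr ⟨z * w, hmul a b z hz w hw, ?_⟩
    rw [map_mul]
    exact mul_ne_zero hz0 hw0
  -- every element of P satisfies g ^ p = 1
  have hPp : ∀ g ∈ P, g ^ p = 1 := by
    intro g hg
    obtain ⟨z, hz, hz0⟩ := (hPmem g).mp hg
    set c := ψ z with hc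
    have hn : z - c • 1 ∈ M := by
      refine (mem_M_iff hp.ne_zero _).mpr ?_
      rw [map_sub, ← hψ, psi_smul_one, ← hc, sub_self]
    have hzp : z ^ p = c ^ p • (1 : O) := by
      haveI : Fact p.Prime := ⟨hp⟩
      haveI : Nontrivial O := nontrivial_of_ne 1 0 hone_ne
      haveI : CharP O p := charP_of_injective_algebraMap' (A := O) F p
      have hdec : z = c • (1 : O) + (z - c • 1) := by ring
      rw [hdec, add_pow_char, truncO_pow_p_eq_zero hp _ hn, add_zero, smul_pow, one_pow]
    have hnz : z ^ p ≠ 0 := by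
      rw [hzp]
      intro h
      have : (1 : O) = (c ^ p)⁻¹ • (c ^ p • (1 : O)) := by
        rw [smul_smul, inv_mul_cancel₀ (pow_ne_zero _ hz0), one_smul]
      rw [h, smul_zero] at this
      exact hone_ne this
    by_contra hne
    have h1 : z ^ p ∈ comp (g ^ p) := hpow g z hz p
    have h2 : z ^ p ∈ comp 1 := by
      rw [hzp]
      exact Submodule.smul_mem _ _ hone
    have hdisj := hindep.pairwiseDisjoint hne
    exact hnz (Submodule.disjoint_def.mp hdisj _ h1 h2)
  -- closure under inverses
  have hPinv : ∀ g ∈ P, g⁻¹ ∈ P := by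
    intro g hg
    have hginv : g⁻¹ = g ^ (p - 1) := by
      have hgp := hPp g hg
      have : g * g ^ (p - 1) = 1 := by
        rw [← pow_succ', Nat.sub_add_cancel hp.one_le, hgp]
      exact inv_eq_of_mul_eq_one_right this
    obtain ⟨z, hz, hz0⟩ := (hPmem g).mp hg
    rw [hginv]
    exact (hPmem _).mpr ⟨z ^ (p - 1), hpow g z hz (p - 1), by
      rw [map_pow]; exact pow_ne_zero _ hz0⟩
  exact ⟨hP1, hPmul, hPinv, hPp⟩
end

section
/- Let L be a Lie algebra graded by a group G (written multiplicatively): L = \bigoplus_{g\in G} L_g with [L_g, L_h] \subseteq L_{gh}. If L is simple (as a Lie algebra), then the subgroup of G generated by the support { g : L_g \neq 0 } is abelian. -/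
section Aux

variable {F L : Type*} [Field F] [LieRing L] [LieAlgebra F L]
  {G : Type*} [Group G] [DecidableEq G]

/-- If `a*b ≠ b*a` then the bracket of the corresponding components vanishes, since it lies
in both `comp (a*b)` and `comp (b*a)`, which intersect trivially. -/
lemma grading_bracket_eq_zero (comp : G → Submodule F L)
    (hdirect : DirectSum.IsInternal comp)
    (hbr : ∀ g h : G, ∀ x ∈ comp g, ∀ y ∈ comp h, ⁅x, y⁆ ∈ comp (g * h))
    {a b : G} (hne : a * b ≠ b * a) {x y : L} (hx : x ∈ comp a) (hy : y ∈ comp b) :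
    ⁅x, y⁆ = 0 := by
  have h1 : ⁅x, y⁆ ∈ comp (a * b) := hbr _ _ _ hx _ hy
  have h2 : ⁅x, y⁆ ∈ comp (b * a) := by
    have h3 : ⁅y, x⁆ ∈ comp (b * a) := hbr _ _ _ hy _ hx
    rw [← lie_skew]
    exact (comp (b * a)).neg_mem h3
  have hdisj : Disjoint (comp (a * b)) (comp (b * a)) :=
    hdirect.submodule_iSupIndep.pairwiseDisjoint hne
  exact Submodule.disjoint_def.mp hdisj _ h1 h2

/-- Any two elements of the support of a grading on a simple Lie algebra commute. -/
lemma support_commute [LieAlgebra.IsSimple F L] (comp : G → Submodule F L)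
    (hdirect : DirectSum.IsInternal comp)
    (hbr : ∀ g h : G, ∀ x ∈ comp g, ∀ y ∈ comp h, ⁅x, y⁆ ∈ comp (g * h))
    {g h : G} (hg : comp g ≠ ⊥) (hh : comp h ≠ ⊥) : g * h = h * g := by
  by_contra hC
  have key : ∀ (a b : G), a * b ≠ b * a → ∀ (x y : L), x ∈ comp a → y ∈ comp b → ⁅x, y⁆ = 0 :=
    fun _ _ hne _ _ hx hy => grading_bracket_eq_zero comp hdirect hbr hne hx hy
  -- the set of indices not commuting with `g`
  set D : Set G := {l | g * l ≠ l * g} with hD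
  -- N = sum of components over D
  set N : Submodule F L := ⨆ l : D, comp (l : G) with hN
  have hcompN : ∀ l ∈ D, comp l ≤ N := fun l hl => le_iSup (fun l : D => comp (l : G)) ⟨l, hl⟩
  -- B = span of brackets of homogeneous elements with indices in D
  set B : Submodule F L := Submodule.span F
    {x | ∃ l₁ ∈ D, ∃ l₂ ∈ D, ∃ n ∈ comp l₁, ∃ m ∈ comp l₂, x = ⁅n, m⁆} with hB
  set P : Submodule F L := N ⊔ B with hP
  -- bracket of a homogeneous element with a homogeneous element of N lands in P
  have fact_ln : ∀ (k : G) (x : L), x ∈ comp k → ∀ l ∈ D, ∀ n ∈ comp l, ⁅x, n⁆ ∈ P := by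
    intro k x hx l hl n hn
    by_cases hk : g * k = k * g
    · -- then k*l ∈ D, so the bracket lies in N
      have hkl : k * l ∈ D := by
        intro hc
        apply hl
        have : k * (g * l) = k * (l * g) := by
          calc k * (g * l) = g * k * l := by rw [← mul_assoc, ← hk]
          _ = k * l * g := by rw [mul_assoc]; exact hc
          _ = k * (l * g) := by rw [mul_assoc]
        exact mul_left_cancel this
      exact le_sup_left (α := Submodule F L) (hcompN _ hkl (hbr _ _ _ hx _ hn))
    · -- then k ∈ D, so the bracket is a generator of B
      exact le_sup_right (α := Submodule F L)
        (Submodule.subset_span ⟨k, hk, l, hl, x, hx, n, hn, rfl⟩)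
  have fact1 : ∀ (k : G) (x : L), x ∈ comp k → ∀ n ∈ N, ⁅x, n⁆ ∈ P := by
    intro k x hx n hn
    refine Submodule.iSup_induction (motive := fun n => ⁅x, n⁆ ∈ P) _ hn ?_ ?_ ?_
    · rintro ⟨l, hl⟩ m hm
      exact fact_ln k x hx l hl m hm
    · simp only [lie_zero]; exact P.zero_mem
    · intro a b ha hb
      rw [lie_add]; exact P.add_mem ha hb
  have fact2 : ∀ (k : G) (x : L), x ∈ comp k → ∀ b ∈ B, ⁅x, b⁆ ∈ P := by
    intro k x hx b hb
    refine Submodule.span_induction (p := fun b _ => ⁅x, b⁆ ∈ P) ?_ ?_ ?_ ?_ hb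
    · rintro y ⟨l₁, hl₁, l₂, hl₂, n, hn, m, hm, rfl⟩
      rw [leibniz_lie]
      refine P.add_mem ?_ ?_
      · exact fact_ln (k * l₁) _ (hbr _ _ _ hx _ hn) l₂ hl₂ m hm
      · rw [← lie_skew]
        exact P.neg_mem (fact_ln (k * l₂) _ (hbr _ _ _ hx _ hm) l₁ hl₁ n hn)
    · simp only [lie_zero]; exact P.zero_mem
    · intro a b _ _ ha hb
      rw [lie_add]; exact P.add_mem ha hb
    · intro c a _ ha
      rw [lie_smul]; exact P.smul_mem c ha
  -- P is an ideal
  have fact3 : ∀ (x : L), ∀ p ∈ P, ⁅x, p⁆ ∈ P := by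
    intro x
    have hx : x ∈ ⨆ k, comp k := by
      rw [hdirect.submodule_iSup_eq_top]; trivial
    refine Submodule.iSup_induction (motive := fun x => ∀ p ∈ P, ⁅x, p⁆ ∈ P) _ hx ?_ ?_ ?_
    · intro k x hx p hp
      obtain ⟨n, hn, b, hb, rfl⟩ := Submodule.mem_sup.mp hp
      rw [lie_add]
      exact P.add_mem (fact1 k x hx n hn) (fact2 k x hx b hb)
    · intro p _; rw [zero_lie]; exact P.zero_mem
    · intro a b ha hb p hp
      rw [add_lie]; exact P.add_mem (ha p hp) (hb p hp)
  -- comp g centralizes P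
  have zfact : ∀ z ∈ comp g, ∀ p ∈ P, ⁅z, p⁆ = 0 := by
    intro z hz p hp
    obtain ⟨n, hn, b, hb, rfl⟩ := Submodule.mem_sup.mp hp
    rw [lie_add]
    have h1 : ⁅z, n⁆ = 0 := by
      refine Submodule.iSup_induction (motive := fun n => ⁅z, n⁆ = 0) _ hn ?_ ?_ ?_
      · rintro ⟨l, hl⟩ m hm
        exact key _ _ hl _ _ hz hm
      · exact lie_zero z
      · intro a b ha hb; rw [lie_add, ha, hb, add_zero]
    have h2 : ⁅z, b⁆ = 0 := by
      refine Submodule.span_induction (p := fun b _ => ⁅z, b⁆ = 0) ?_ ?_ ?_ ?_ hb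
      · rintro y ⟨l₁, hl₁, l₂, hl₂, n, hn', m, hm, rfl⟩
        rw [leibniz_lie, key _ _ hl₁ _ _ hz hn', key _ _ hl₂ _ _ hz hm, zero_lie, lie_zero, add_zero]
      · exact lie_zero z
      · intro a b _ _ ha hb; rw [lie_add, ha, hb, add_zero]
      · intro c a _ ha; rw [lie_smul, ha, smul_zero]
    rw [h1, h2, add_zero]
  -- P as a Lie ideal
  let I : LieIdeal F L := { P with lie_mem := fun {x m} hm => fact3 x m hm }
  have hmemI : ∀ y : L, y ∈ I ↔ y ∈ P := fun y => Iff.rfl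
  have hIbot : I ≠ ⊥ := by
    intro hbot
    obtain ⟨y, hy, hy0⟩ := Submodule.exists_mem_ne_zero_of_ne_bot hh
    have : y ∈ I := (hmemI y).mpr (le_sup_left (α := Submodule F L) (hcompN h hC hy))
    rw [hbot, LieSubmodule.mem_bot] at this
    exact hy0 this
  have hItop : I = ⊤ := (LieAlgebra.IsSimple.eq_bot_or_eq_top I).resolve_left hIbot
  -- so comp g is central; since comp g ≠ ⊥ the center is nontrivial, contradiction
  obtain ⟨z, hz, hz0⟩ := Submodule.exists_mem_ne_zero_of_ne_bot hg
  have hzc : z ∈ LieAlgebra.center F L := by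
    rw [LieModule.mem_maxTrivSubmodule]
    intro x
    have hx : x ∈ I := by rw [hItop]; trivial
    have := zfact z hz x ((hmemI x).mp hx)
    rw [← lie_skew, this, neg_zero]
  have hcbot : LieAlgebra.center F L ≠ ⊥ := by
    intro hbot
    rw [hbot, LieSubmodule.mem_bot] at hzc
    exact hz0 hzc
  have hctop : LieAlgebra.center F L = ⊤ :=
    (LieAlgebra.IsSimple.eq_bot_or_eq_top _).resolve_left hcbot
  exact LieAlgebra.IsSimple.non_abelian (R := F) (L := L)
    ((LieModule.isTrivial_iff_max_triv_eq_top F L L).mpr hctop)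

end Aux

/-- If a simple Lie algebra `L` is graded by a group `G`, i.e. `L = ⨁_g L_g` with
`⁅L_g, L_h⁆ ⊆ L_{gh}`, then the subgroup generated by the support is abelian. -/
theorem stmt5 {F L : Type*} [Field F] [LieRing L] [LieAlgebra F L]
    [LieAlgebra.IsSimple F L] {G : Type*} [Group G] [DecidableEq G]
    (comp : G → Submodule F L)
    (hdirect : DirectSum.IsInternal comp)
    (hbr : ∀ g h : G, ∀ x ∈ comp g, ∀ y ∈ comp h, ⁅x, y⁆ ∈ comp (g * h)) :
    ∀ a ∈ Subgroup.closure {g : G | comp g ≠ ⊥},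
      ∀ b ∈ Subgroup.closure {g : G | comp g ≠ ⊥}, a * b = b * a := by
  set S : Set G := {g : G | comp g ≠ ⊥} with hS
  have hcomm : ∀ a ∈ S, ∀ b ∈ S, a * b = b * a := fun a ha b hb =>
    support_commute comp hdirect hbr ha hb
  intro a ha b hb
  have h1 : Subgroup.closure S ≤ Subgroup.centralizer S := by
    rw [Subgroup.closure_le]
    intro x hx
    rw [SetLike.mem_coe, Subgroup.mem_centralizer_iff]
    intro y hy
    exact hcomm y hy x hx
  have hb' : ∀ s ∈ S, s * b = b * s := Subgroup.mem_centralizer_iff.mp (h1 hb)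
  have h2 : Subgroup.closure S ≤ Subgroup.centralizer {b} := by
    rw [Subgroup.closure_le]
    intro s hs
    rw [SetLike.mem_coe, Subgroup.mem_centralizer_iff]
    intro y hy
    rw [Set.mem_singleton_iff] at hy
    subst hy
    exact (hb' s hs).symm
  have := Subgroup.mem_centralizer_iff.mp (h2 ha) b rfl
  exact this.symm
end

section
/- Let z_i = 1 + x_i in \mathcal{O}(m;1) (char p > 0) and for a multi-index \alpha set z^\alpha = z_1^{\alpha_1}\cdots z_m^{\alpha_m}. Then for all \alpha, \beta one has [D_{1,2}(z^\alpha), D_{1,2}(z^\beta)] = -(\alpha_1\beta_2 - \alpha_2\beta_1) D_{1,2}(z^{\alpha+\beta-\varepsilon_1-\varepsilon_2}), where exponents are read modulo p and \varepsilon_i is the i-th standard multi-index. -/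
set_option synthInstance.maxHeartbeats 1000000
set_option maxHeartbeats 1000000

section Aux
variable {F : Type*} [Field F] {p m : ℕ} [CharP F p]

lemma z_pow_p (hp : p.Prime) (i : Fin m) : ((1 : TruncO F p m) + xv F p m i) ^ p = 1 := by
  haveI := Fact.mk hp
  have h0 : (Ideal.Quotient.mk (Ideal.span (Set.range fun i : Fin m =>
      (MvPolynomial.X i : MvPolynomial (Fin m) F) ^ p))) (MvPolynomial.X i ^ p) = 0 :=
    Ideal.Quotient.eq_zero_iff_mem.mpr (Ideal.subset_span ⟨i, rfl⟩)
  have h1 : ((1 : TruncO F p m) + xv F p m i) ^ p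
      = Ideal.Quotient.mk _ (((1 : MvPolynomial (Fin m) F) + MvPolynomial.X i) ^ p) := by
    simp [xv]
  rw [h1, add_pow_char, one_pow, map_add, map_one, h0, add_zero]

lemma z_pow_val_add (hp : p.Prime) (i : Fin m) (u v : ZMod p) :
    ((1 : TruncO F p m) + xv F p m i) ^ u.val * ((1 : TruncO F p m) + xv F p m i) ^ v.val
      = ((1 : TruncO F p m) + xv F p m i) ^ (u + v).val := by
  haveI : NeZero p := ⟨hp.ne_zero⟩
  have key : ∀ n : ℕ, ((1 : TruncO F p m) + xv F p m i) ^ n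
      = ((1 : TruncO F p m) + xv F p m i) ^ (n % p) := by
    intro n
    conv_lhs => rw [← Nat.div_add_mod n p]
    rw [pow_add, pow_mul, z_pow_p hp, one_pow, one_mul]
  rw [← pow_add, key (u.val + v.val), ZMod.val_add]

lemma val_sub_one (hp : p.Prime) (u : ZMod p) (hu : u ≠ 0) : (u - 1).val = u.val - 1 := by
  haveI : NeZero p := ⟨hp.ne_zero⟩
  haveI : Fact (1 < p) := ⟨hp.one_lt⟩
  have h1 : ((u - 1) + 1) = u := by ring
  have h2 : u.val = ((u - 1).val + (1 : ZMod p).val) % p := by rw [← ZMod.val_add, h1]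
  rw [ZMod.val_one] at h2
  have hlt : (u - 1).val < p := ZMod.val_lt _
  have hu' : u.val ≠ 0 := fun h => hu ((ZMod.val_eq_zero u).mp h)
  rcases Nat.lt_or_ge ((u - 1).val + 1) p with h | h
  · rw [Nat.mod_eq_of_lt h] at h2; omega
  · have hpp : (u - 1).val + 1 = p := by omega
    rw [hpp, Nat.mod_self] at h2
    exact absurd h2 hu'

lemma deriv_prod_zero {A : Type*} [CommRing A] [Algebra F A]
    (Dd : Derivation F A A) {ι : Type*} (s : Finset ι) (f : ι → A)
    (h : ∀ j ∈ s, Dd (f j) = 0) : Dd (∏ j ∈ s, f j) = 0 := by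
  classical
  induction s using Finset.induction_on with
  | empty => simp
  | insert _ _ hj ih =>
    rw [Finset.prod_insert hj, Derivation.leibniz, h _ (Finset.mem_insert_self _ _),
      ih fun j hjs => h j (Finset.mem_insert_of_mem hjs)]
    simp

omit [CharP F p] in
lemma adjoin_xv_top : Algebra.adjoin F (Set.range (xv F p m)) = ⊤ := by
  have hr : Set.range (xv F p m)
      = ⇑(Ideal.Quotient.mkₐ F (Ideal.span (Set.range fun i : Fin m =>
          (MvPolynomial.X i : MvPolynomial (Fin m) F) ^ p))) '' Set.range MvPolynomial.X := by
    rw [← Set.range_comp]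
    apply congrArg Set.range
    funext i
    simp [xv, Ideal.Quotient.mkₐ_eq_mk]
  rw [hr, ← AlgHom.map_adjoin, MvPolynomial.adjoin_range_X, Algebra.map_top]
  exact (AlgHom.range_eq_top _).mpr (Ideal.Quotient.mkₐ_surjective F _)

omit [CharP F p] in
lemma trunc_derivation_ext (D1 D2 : Derivation F (TruncO F p m) (TruncO F p m))
    (h : ∀ i, D1 (xv F p m i) = D2 (xv F p m i)) : D1 = D2 := by
  apply Derivation.ext_of_adjoin_eq_top _ (adjoin_xv_top (F := F) (p := p) (m := m))
  rintro _ ⟨i, rfl⟩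
  exact h i

lemma pd_zp (hp : p.Prime) (pd : Fin m → Derivation F (TruncO F p m) (TruncO F p m))
    (hpd : ∀ i j : Fin m, pd i (xv F p m j) = if i = j then 1 else 0)
    (a : Fin m → ZMod p) (i : Fin m) :
    pd i (∏ j, ((1 : TruncO F p m) + xv F p m j) ^ (a j).val)
      = ((a i).val : F) •
          ∏ j, ((1 : TruncO F p m) + xv F p m j)
            ^ (((a - Pi.single i 1 : Fin m → ZMod p)) j).val := by
  haveI : NeZero p := ⟨hp.ne_zero⟩
  have hpdz : ∀ k j : Fin m, pd k ((1 : TruncO F p m) + xv F p m j)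
      = if k = j then 1 else 0 := by
    intro k j
    rw [map_add, Derivation.map_one_eq_zero, zero_add, hpd]
  rw [← Finset.mul_prod_erase Finset.univ _ (Finset.mem_univ i),
      ← Finset.mul_prod_erase Finset.univ _ (Finset.mem_univ i)]
  have hrest : pd i (∏ j ∈ Finset.univ.erase i,
      ((1 : TruncO F p m) + xv F p m j) ^ (a j).val) = 0 := by
    apply deriv_prod_zero
    intro j hj
    have hij : i ≠ j := (Finset.ne_of_mem_erase hj).symm
    rw [Derivation.leibniz_pow, hpdz i j, if_neg hij]
    simp
  have hresteq : (∏ j ∈ Finset.univ.erase i,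
        ((1 : TruncO F p m) + xv F p m j)
          ^ (((a - Pi.single i 1 : Fin m → ZMod p)) j).val)
      = ∏ j ∈ Finset.univ.erase i, ((1 : TruncO F p m) + xv F p m j) ^ (a j).val := by
    apply Finset.prod_congr rfl
    intro j hj
    have hji : j ≠ i := Finset.ne_of_mem_erase hj
    simp [Pi.single_eq_of_ne hji]
  have hsingle : ((a - Pi.single i 1 : Fin m → ZMod p)) i = a i - 1 := by simp
  rw [hresteq, Derivation.leibniz, hrest, smul_zero, zero_add,
      Derivation.leibniz_pow, hpdz i i, if_pos rfl, hsingle]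
  by_cases h0 : a i = 0
  · simp [h0]
  · rw [val_sub_one hp _ h0]
    simp only [smul_eq_mul, nsmul_eq_mul, mul_one]
    rw [Nat.cast_smul_eq_nsmul, nsmul_eq_mul]
    ring

lemma zp_mul (hp : p.Prime) (a b : Fin m → ZMod p) :
    (∏ j, ((1 : TruncO F p m) + xv F p m j) ^ (a j).val)
      * (∏ j, ((1 : TruncO F p m) + xv F p m j) ^ (b j).val)
      = ∏ j, ((1 : TruncO F p m) + xv F p m j) ^ ((a + b) j).val := by
  rw [← Finset.prod_mul_distrib]
  exact Finset.prod_congr rfl fun j _ => by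
    rw [z_pow_val_add hp]
    simp

end Aux

set_option maxHeartbeats 8000000 in
/-- With `z_i = 1 + x_i` and `z^α = ∏ z_i^{α_i}` (exponents read modulo `p`), one has
`[D_{1,2}(z^α), D_{1,2}(z^β)] = -(α_1 β_2 - α_2 β_1) D_{1,2}(z^{α+β-ε_1-ε_2})`. -/
theorem stmt7 {F : Type*} [Field F] (p m : ℕ) (hp : p.Prime) [CharP F p] (hm : 2 ≤ m)
    (pd : Fin m → Derivation F (TruncO F p m) (TruncO F p m))
    (hpd : ∀ i j : Fin m, pd i (xv F p m j) = if i = j then 1 else 0)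
    (α β : Fin m → ZMod p) :
    let i0 : Fin m := ⟨0, by omega⟩
    let i1 : Fin m := ⟨1, by omega⟩
    let z : Fin m → TruncO F p m := fun i => 1 + xv F p m i
    let zp : (Fin m → ZMod p) → TruncO F p m := fun a => ∏ i, z i ^ (a i).val
    let D : Fin m → Fin m → TruncO F p m → Derivation F (TruncO F p m) (TruncO F p m) :=
      fun i j f => (pd j f) • pd i - (pd i f) • pd j
    ⁅D i0 i1 (zp α), D i0 i1 (zp β)⁆ =
      (-(((α i0 * β i1 - α i1 * β i0 : ZMod p)).val : F)) •
        D i0 i1 (zp (α + β - Pi.single i0 1 - Pi.single i1 1)) := by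
  intro i0 i1 z zp D
  haveI : NeZero p := ⟨hp.ne_zero⟩
  have h01 : i0 ≠ i1 := by simp [i0, i1, Fin.ext_iff]
  have h10 : i1 ≠ i0 := h01.symm
  set φ : ZMod p →+* F := ZMod.castHom dvd_rfl F with hφdef
  have hφ : ∀ u : ZMod p, ((u.val : ℕ) : F) = φ u := fun u => by
    rw [ZMod.natCast_val, hφdef, ZMod.castHom_apply]
  have hzp : ∀ a : Fin m → ZMod p,
      zp a = ∏ j, ((1 : TruncO F p m) + xv F p m j) ^ (a j).val := fun a => rfl
  have hpdzp : ∀ (i : Fin m) (a : Fin m → ZMod p),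
      pd i (zp a) = φ (a i) • zp (a - Pi.single i 1) := by
    intro i a
    rw [hzp, hzp, pd_zp hp pd hpd a i, hφ]
  have hmul : ∀ a b, zp a * zp b = zp (a + b) := fun a b => by
    rw [hzp, hzp, hzp]; exact zp_mul hp a b
  have hDapp : ∀ (f w : TruncO F p m),
      D i0 i1 f w = pd i1 f * pd i0 w - pd i0 f * pd i1 w := by
    intro f w
    simp only [D, Derivation.sub_apply, Derivation.smul_apply, smul_eq_mul]
  have hDz : ∀ a c : Fin m → ZMod p,
      D i0 i1 (zp a) (zp c)
        = φ (a i1 * c i0 - a i0 * c i1) •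
            zp (a + c - Pi.single i0 1 - Pi.single i1 1) := by
    intro a c
    rw [hDapp, hpdzp i1 a, hpdzp i0 c, hpdzp i0 a, hpdzp i1 c, smul_mul_smul_comm, smul_mul_smul_comm,
        hmul, hmul]
    have e1 : a - Pi.single i1 1 + (c - Pi.single i0 1)
        = a + c - Pi.single i0 1 - Pi.single i1 1 := by abel
    have e2 : a - Pi.single i0 1 + (c - Pi.single i1 1)
        = a + c - Pi.single i0 1 - Pi.single i1 1 := by abel
    rw [e1, e2, ← sub_smul, ← map_mul, ← map_mul, ← map_sub]
  apply trunc_derivation_ext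
  intro k
  rw [Derivation.commutator_apply, Derivation.smul_apply, hφ, ← map_neg φ]
  by_cases hk0 : k = i0
  · subst hk0
    have hb : D i0 i1 (zp β) (xv F p m i0) = φ (β i1) • zp (β - Pi.single i1 1) := by
      rw [hDapp, hpd i0 i0, hpd i1 i0, if_pos rfl, if_neg h10, mul_one, mul_zero, sub_zero,
        hpdzp i1 β]
    have ha : D i0 i1 (zp α) (xv F p m i0) = φ (α i1) • zp (α - Pi.single i1 1) := by
      rw [hDapp, hpd i0 i0, hpd i1 i0, if_pos rfl, if_neg h10, mul_one, mul_zero, sub_zero,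
        hpdzp i1 α]
    have hg : D i0 i1 (zp (α + β - Pi.single i0 1 - Pi.single i1 1)) (xv F p m i0)
        = φ (((α + β - Pi.single i0 1 - Pi.single i1 1 : Fin m → ZMod p)) i1) •
            zp (α + β - Pi.single i0 1 - Pi.single i1 1 - Pi.single i1 1) := by
      rw [hDapp, hpd i0 i0, hpd i1 i0, if_pos rfl, if_neg h10, mul_one, mul_zero, sub_zero,
        hpdzp i1 (α + β - Pi.single i0 1 - Pi.single i1 1)]
    rw [hb, ha, hg, Derivation.map_smul, Derivation.map_smul,
      hDz α (β - Pi.single i1 1), hDz β (α - Pi.single i1 1)]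
    have e1 : α + (β - Pi.single i1 1) - Pi.single i0 1 - Pi.single i1 1
        = α + β - Pi.single i0 1 - Pi.single i1 1 - Pi.single i1 1 := by abel
    have e2 : β + (α - Pi.single i1 1) - Pi.single i0 1 - Pi.single i1 1
        = α + β - Pi.single i0 1 - Pi.single i1 1 - Pi.single i1 1 := by abel
    rw [e1, e2]
    simp only [Pi.add_apply, Pi.sub_apply, Pi.single_eq_same,
      Pi.single_eq_of_ne h01, Pi.single_eq_of_ne h10, sub_zero]
    rw [smul_smul, smul_smul, smul_smul, ← sub_smul]
    congr 1
    simp only [← map_mul, ← map_sub]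
    exact congrArg φ (by ring)
  · by_cases hk1 : k = i1
    · subst hk1
      have hne : ¬ (i0 = i1) := h01
      have hb : D i0 i1 (zp β) (xv F p m i1) = -(φ (β i0) • zp (β - Pi.single i0 1)) := by
        rw [hDapp, hpd i0 i1, hpd i1 i1, if_neg hne, if_pos rfl, mul_zero, mul_one, zero_sub,
          hpdzp i0 β]
      have ha : D i0 i1 (zp α) (xv F p m i1) = -(φ (α i0) • zp (α - Pi.single i0 1)) := by
        rw [hDapp, hpd i0 i1, hpd i1 i1, if_neg hne, if_pos rfl, mul_zero, mul_one, zero_sub,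
          hpdzp i0 α]
      have hg : D i0 i1 (zp (α + β - Pi.single i0 1 - Pi.single i1 1)) (xv F p m i1)
          = -(φ (((α + β - Pi.single i0 1 - Pi.single i1 1 : Fin m → ZMod p)) i0) •
              zp (α + β - Pi.single i0 1 - Pi.single i1 1 - Pi.single i0 1)) := by
        rw [hDapp, hpd i0 i1, hpd i1 i1, if_neg hne, if_pos rfl, mul_zero, mul_one, zero_sub,
          hpdzp i0 (α + β - Pi.single i0 1 - Pi.single i1 1)]
      rw [hb, ha, hg, Derivation.map_neg, Derivation.map_neg,
        Derivation.map_smul, Derivation.map_smul,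
        hDz α (β - Pi.single i0 1), hDz β (α - Pi.single i0 1)]
      have e1 : α + (β - Pi.single i0 1) - Pi.single i0 1 - Pi.single i1 1
          = α + β - Pi.single i0 1 - Pi.single i1 1 - Pi.single i0 1 := by abel
      have e2 : β + (α - Pi.single i0 1) - Pi.single i0 1 - Pi.single i1 1
          = α + β - Pi.single i0 1 - Pi.single i1 1 - Pi.single i0 1 := by abel
      rw [e1, e2]
      simp only [Pi.add_apply, Pi.sub_apply, Pi.single_eq_same,
        Pi.single_eq_of_ne h01, Pi.single_eq_of_ne h10, sub_zero]
      rw [smul_smul, smul_smul, neg_sub_neg, smul_neg, smul_smul,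
        ← sub_smul, ← neg_smul]
      congr 1
      simp only [← map_mul, ← map_sub, ← map_neg]
      exact congrArg φ (by ring)
    · have hne0 : ¬ (i0 = k) := fun h => hk0 h.symm
      have hne1 : ¬ (i1 = k) := fun h => hk1 h.symm
      have hb : D i0 i1 (zp β) (xv F p m k) = 0 := by
        rw [hDapp, hpd i0 k, hpd i1 k, if_neg hne0, if_neg hne1, mul_zero, mul_zero, sub_zero]
      have ha : D i0 i1 (zp α) (xv F p m k) = 0 := by
        rw [hDapp, hpd i0 k, hpd i1 k, if_neg hne0, if_neg hne1, mul_zero, mul_zero, sub_zero]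
      have hg : D i0 i1 (zp (α + β - Pi.single i0 1 - Pi.single i1 1)) (xv F p m k) = 0 := by
        rw [hDapp, hpd i0 k, hpd i1 k, if_neg hne0, if_neg hne1, mul_zero, mul_zero, sub_zero]
      rw [hb, ha, hg, Derivation.map_zero, Derivation.map_zero, sub_zero, smul_zero]
end
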